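/- Let (X_n)_{n≥1} be i.i.d. real random variables with distribution P and cumulative distribution function F, and let g : ℝ → ℝ^m be measurable with Pg = 0, E‖g(X_1)‖² < ∞, and Σ = P(ggᵀ) positive definite. Define the informed empirical distribution function 𝔽_{n,I}(t) = ∑_{i=1}^n p_i 1_{X_i ≤ t} and the informed empirical α-quantile q^I_{n,α} = inf{t ∈ ℝ : 𝔽_{n,I}(t) ≥ α} for α ∈ (0,1). If F is strictly increasing at q_α = F^{-1}(α) (i.e. F(q_α − ε) < α < F(q_α + ε) for every ε > 0), then q^I_{n,α} → q_α almost surely as n → ∞. -/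

import Mathlib

open MeasureTheory ProbabilityTheory Filter Matrix

lemma slln_aux {Ω : Type*} [MeasurableSpace Ω] (μ : Measure Ω) [IsProbabilityMeasure μ]
    (P : Measure ℝ)
    (X : ℕ → Ω → ℝ) (hXmeas : ∀ i, Measurable (X i))
    (hXid : ∀ i, Measure.map (X i) μ = P)
    (hXindep : iIndepFun X μ)
    (h : ℝ → ℝ) (hmeas : Measurable h) (hint : Integrable h P) :
    ∀ᵐ ω ∂μ, Tendsto (fun n : ℕ => (n : ℝ)⁻¹ * ∑ i ∈ Finset.range n, h (X i ω)) atTop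
      (nhds (∫ x, h x ∂P)) := by
  have hint0 : Integrable (fun ω => h (X 0 ω)) μ := by
    have : Integrable h (Measure.map (X 0) μ) := by rw [hXid 0]; exact hint
    exact (integrable_map_measure hmeas.aestronglyMeasurable (hXmeas 0).aemeasurable).mp this
  have hindep : Pairwise (Function.onFun (IndepFun · · μ) fun i ω => h (X i ω)) := by
    intro i j hij
    exact (hXindep.indepFun hij).comp hmeas hmeas
  have hident : ∀ i, IdentDistrib (fun ω => h (X i ω)) (fun ω => h (X 0 ω)) μ μ := by
    intro i
    have hXi : IdentDistrib (X i) (X 0) μ μ :=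
      ⟨(hXmeas i).aemeasurable, (hXmeas 0).aemeasurable, by rw [hXid i, hXid 0]⟩
    exact hXi.comp hmeas
  have hkey := strong_law_ae_real (fun i ω => h (X i ω)) hint0 hindep hident
  have hEq : (μ[fun ω => h (X 0 ω)]) = ∫ x, h x ∂P := by
    rw [← hXid 0, integral_map (hXmeas 0).aemeasurable hmeas.aestronglyMeasurable]
  rw [hEq] at hkey
  filter_upwards [hkey] with ω hω
  simpa [div_eq_inv_mul] using hω

-- deterministic core, abstracted
lemma det_core {m : ℕ}
    (x : ℕ → ℝ) (g : ℝ → Fin m → ℝ)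
    (F : ℝ → ℝ) (α qα : ℝ) (hα : α ∈ Set.Ioo (0:ℝ) 1)
    (hstrict : ∀ ε > (0:ℝ), F (qα - ε) < α ∧ α < F (qα + ε))
    (Sig : Matrix (Fin m) (Fin m) ℝ) (hd0 : Sig.det ≠ 0)
    (c : Fin m → ℝ)
    (Pn : ℕ → Fin m → ℝ)
    (hPn : ∀ n j, Pn n j = (n : ℝ)⁻¹ * ∑ i ∈ Finset.range n, g (x i) j)
    (Sn : ℕ → Matrix (Fin m) (Fin m) ℝ)
    (hSn : ∀ n j k, Sn n j k =
      (n : ℝ)⁻¹ * (∑ i ∈ Finset.range n, g (x i) j * g (x i) k) - Pn n j * Pn n k)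
    (G : ℕ → ℝ → ℝ)
    (hG : ∀ n t, G n t = ∑ i ∈ Finset.range n,
      ((n : ℝ)⁻¹ * (1 - g (x i) ⬝ᵥ ((Sn n)⁻¹ *ᵥ Pn n) + Pn n ⬝ᵥ ((Sn n)⁻¹ *ᵥ Pn n)))
        * (if x i ≤ t then 1 else 0))
    (q : ℕ → ℝ) (hq : ∀ n, q n = sInf {t : ℝ | α ≤ G n t})
    (hA : ∀ j, Tendsto (fun n : ℕ => (n : ℝ)⁻¹ * ∑ i ∈ Finset.range n, g (x i) j)
      atTop (nhds 0))
    (hB : ∀ j k, Tendsto (fun n : ℕ => (n : ℝ)⁻¹ * ∑ i ∈ Finset.range n, g (x i) j * g (x i) k)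
      atTop (nhds (Sig j k)))
    (hC : ∀ j, Tendsto (fun n : ℕ => (n : ℝ)⁻¹ * ∑ i ∈ Finset.range n, |g (x i) j|)
      atTop (nhds (c j)))
    (hD : ∀ k : ℕ, ∀ s : Bool, Tendsto
      (fun n : ℕ => (n : ℝ)⁻¹ * ∑ i ∈ Finset.range n,
        (if x i ≤ (if s then qα + 1/(k+1) else qα - 1/(k+1)) then (1:ℝ) else 0)) atTop
      (nhds (F (if s then qα + 1/(k+1) else qα - 1/(k+1))))) :
    Tendsto q atTop (nhds qα) := by
  classical
  set v : ℕ → Fin m → ℝ := fun n => (Sn n)⁻¹ *ᵥ Pn n with hv_def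
  set Fn : ℕ → ℝ → ℝ :=
    fun n t => (n : ℝ)⁻¹ * ∑ i ∈ Finset.range n, (if x i ≤ t then (1:ℝ) else 0) with hFn_def
  have hPnj : ∀ j, Tendsto (fun n => Pn n j) atTop (nhds 0) := by
    intro j; simp only [hPn]; exact hA j
  have hSnjk : ∀ j k, Tendsto (fun n => Sn n j k) atTop (nhds (Sig j k)) := by
    intro j k
    have h1 := (hB j k).sub ((hPnj j).mul (hPnj k))
    simp only [mul_zero, sub_zero] at h1
    have : (fun n => Sn n j k) = fun n : ℕ =>
        (n : ℝ)⁻¹ * (∑ i ∈ Finset.range n, g (x i) j * g (x i) k) - Pn n j * Pn n k := by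
      funext n; exact hSn n j k
    rw [this]; exact h1
  have hSnt : Tendsto Sn atTop (nhds Sig) := by
    exact tendsto_pi_nhds.mpr fun j => tendsto_pi_nhds.mpr fun k => hSnjk j k
  have hdet : Tendsto (fun n => (Sn n).det) atTop (nhds Sig.det) :=
    ((continuous_id.matrix_det).tendsto Sig).comp hSnt
  have hadj : Tendsto (fun n => (Sn n).adjugate) atTop (nhds Sig.adjugate) :=
    ((continuous_id.matrix_adjugate).tendsto Sig).comp hSnt
  have hinv : Tendsto (fun n => (Sn n)⁻¹) atTop (nhds Sig⁻¹) := by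
    simp only [Matrix.inv_def, Ring.inverse_eq_inv]
    exact (hdet.inv₀ hd0).smul hadj
  have hinvjk : ∀ j k, Tendsto (fun n => (Sn n)⁻¹ j k) atTop (nhds (Sig⁻¹ j k)) := by
    intro j k
    exact tendsto_pi_nhds.mp (tendsto_pi_nhds.mp hinv j) k
  have hvj : ∀ j, Tendsto (fun n => v n j) atTop (nhds 0) := by
    intro j
    have h1 : Tendsto (fun n => ∑ k, (Sn n)⁻¹ j k * Pn n k) atTop
        (nhds (∑ k : Fin m, Sig⁻¹ j k * 0)) :=
      tendsto_finset_sum _ fun k _ => (hinvjk j k).mul (hPnj k)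
    simp only [mul_zero, Finset.sum_const_zero] at h1
    simpa [hv_def, Matrix.mulVec, dotProduct] using h1
  set δ : ℕ → ℝ := fun n => |Pn n ⬝ᵥ v n|
    + ∑ j, |v n j| * ((n:ℝ)⁻¹ * ∑ i ∈ Finset.range n, |g (x i) j|) with hδ_def
  have hδ0 : Tendsto δ atTop (nhds 0) := by
    have h1 : Tendsto (fun n => |Pn n ⬝ᵥ v n|) atTop (nhds 0) := by
      have h2 : Tendsto (fun n => ∑ k, Pn n k * v n k) atTop
          (nhds (∑ k : Fin m, (0:ℝ) * 0)) :=
        tendsto_finset_sum _ fun k _ => (hPnj k).mul (hvj k)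
      simp only [mul_zero, Finset.sum_const_zero] at h2
      have h3 := h2.abs
      rw [abs_zero] at h3
      simpa [dotProduct] using h3
    have h2 : Tendsto (fun n => ∑ j, |v n j| * ((n:ℝ)⁻¹ * ∑ i ∈ Finset.range n, |g (x i) j|))
        atTop (nhds (∑ j : Fin m, |(0:ℝ)| * c j)) :=
      tendsto_finset_sum _ fun j _ => ((hvj j).abs).mul (hC j)
    simp only [abs_zero, zero_mul, Finset.sum_const_zero] at h2
    simpa using h1.add h2
  -- basic properties of Fn
  have hFn0 : ∀ n t, 0 ≤ Fn n t := by
    intro n t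
    apply mul_nonneg (inv_nonneg.mpr (Nat.cast_nonneg n))
    apply Finset.sum_nonneg; intro i _; positivity
  have hFn1 : ∀ n t, Fn n t ≤ 1 := by
    intro n t
    rcases Nat.eq_zero_or_pos n with h | h
    · simp [hFn_def, h]
    · have hb : ∑ i ∈ Finset.range n, (if x i ≤ t then (1:ℝ) else 0) ≤ (n:ℝ) := by
        calc ∑ i ∈ Finset.range n, (if x i ≤ t then (1:ℝ) else 0)
            ≤ ∑ i ∈ Finset.range n, 1 :=
              Finset.sum_le_sum (fun i _ => by split <;> norm_num)
          _ = (n:ℝ) := by simp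
      have hn : (0:ℝ) < n := by exact_mod_cast h
      calc Fn n t = (n:ℝ)⁻¹ * ∑ i ∈ Finset.range n, (if x i ≤ t then (1:ℝ) else 0) := rfl
        _ ≤ (n:ℝ)⁻¹ * n := by
            apply mul_le_mul_of_nonneg_left hb (inv_nonneg.mpr hn.le)
        _ = 1 := inv_mul_cancel₀ hn.ne'
  have hFnmono : ∀ n, ∀ s t : ℝ, s ≤ t → Fn n s ≤ Fn n t := by
    intro n s t hst
    apply mul_le_mul_of_nonneg_left _ (inv_nonneg.mpr (Nat.cast_nonneg n))
    apply Finset.sum_le_sum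
    intro i _
    by_cases h : x i ≤ s
    · simp [h, h.trans hst]
    · simp only [if_neg h]; split <;> norm_num
  -- key uniform bound
  have hkey : ∀ n t, |G n t - Fn n t| ≤ δ n := by
    intro n t
    set A := (n:ℝ)⁻¹ * ∑ i ∈ Finset.range n,
      (g (x i) ⬝ᵥ v n) * (if x i ≤ t then (1:ℝ) else 0) with hA_def
    have hexp : G n t = Fn n t - A + (Pn n ⬝ᵥ v n) * Fn n t := by
      rw [hG]
      have hterm : ∀ i ∈ Finset.range n,
          ((n : ℝ)⁻¹ * (1 - g (x i) ⬝ᵥ ((Sn n)⁻¹ *ᵥ Pn n) + Pn n ⬝ᵥ ((Sn n)⁻¹ *ᵥ Pn n)))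
            * (if x i ≤ t then (1:ℝ) else 0)
          = (n:ℝ)⁻¹ * (if x i ≤ t then (1:ℝ) else 0)
            - (n:ℝ)⁻¹ * ((g (x i) ⬝ᵥ v n) * (if x i ≤ t then (1:ℝ) else 0))
            + (n:ℝ)⁻¹ * ((Pn n ⬝ᵥ v n) * (if x i ≤ t then (1:ℝ) else 0)) := by
        intro i _; rw [hv_def]; ring
      rw [Finset.sum_congr rfl hterm, Finset.sum_add_distrib, Finset.sum_sub_distrib,
        ← Finset.mul_sum, ← Finset.mul_sum, ← Finset.mul_sum, ← Finset.mul_sum]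
      simp only [hFn_def, hA_def]
      ring
    have heq : G n t - Fn n t = (Pn n ⬝ᵥ v n) * Fn n t - A := by rw [hexp]; ring
    rw [heq]
    have hAbound : |A| ≤ ∑ j, |v n j| * ((n:ℝ)⁻¹ * ∑ i ∈ Finset.range n, |g (x i) j|) := by
      have h1 : |A| ≤ (n:ℝ)⁻¹ * ∑ i ∈ Finset.range n,
          |(g (x i) ⬝ᵥ v n) * (if x i ≤ t then (1:ℝ) else 0)| := by
        rw [hA_def, abs_mul, abs_inv, Nat.abs_cast]
        exact mul_le_mul_of_nonneg_left (Finset.abs_sum_le_sum_abs _ _)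
          (inv_nonneg.mpr (Nat.cast_nonneg n))
      refine h1.trans ?_
      have h2 : ∀ i ∈ Finset.range n,
          |(g (x i) ⬝ᵥ v n) * (if x i ≤ t then (1:ℝ) else 0)|
            ≤ ∑ j, |g (x i) j| * |v n j| := by
        intro i _
        rw [abs_mul]
        have hχ : |(if x i ≤ t then (1:ℝ) else 0)| ≤ 1 := by split <;> norm_num
        have hdp : |g (x i) ⬝ᵥ v n| ≤ ∑ j, |g (x i) j| * |v n j| := by
          refine (Finset.abs_sum_le_sum_abs _ _).trans ?_
          apply Finset.sum_le_sum; intro j _; rw [abs_mul]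
        calc |g (x i) ⬝ᵥ v n| * |(if x i ≤ t then (1:ℝ) else 0)|
            ≤ |g (x i) ⬝ᵥ v n| * 1 := mul_le_mul_of_nonneg_left hχ (abs_nonneg _)
          _ = |g (x i) ⬝ᵥ v n| := mul_one _
          _ ≤ _ := hdp
      calc (n:ℝ)⁻¹ * ∑ i ∈ Finset.range n, |(g (x i) ⬝ᵥ v n) * (if x i ≤ t then (1:ℝ) else 0)|
          ≤ (n:ℝ)⁻¹ * ∑ i ∈ Finset.range n, ∑ j, |g (x i) j| * |v n j| :=
            mul_le_mul_of_nonneg_left (Finset.sum_le_sum h2)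
              (inv_nonneg.mpr (Nat.cast_nonneg n))
        _ = ∑ j, |v n j| * ((n:ℝ)⁻¹ * ∑ i ∈ Finset.range n, |g (x i) j|) := by
            simp only [Finset.mul_sum]
            rw [Finset.sum_comm]
            apply Finset.sum_congr rfl
            intro j _
            apply Finset.sum_congr rfl
            intro i _
            ring
    calc |(Pn n ⬝ᵥ v n) * Fn n t - A| ≤ |(Pn n ⬝ᵥ v n) * Fn n t| + |A| := abs_sub _ _
      _ ≤ |Pn n ⬝ᵥ v n| + ∑ j, |v n j| * ((n:ℝ)⁻¹ * ∑ i ∈ Finset.range n, |g (x i) j|) := by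
          apply add_le_add _ hAbound
          rw [abs_mul]
          calc |Pn n ⬝ᵥ v n| * |Fn n t| ≤ |Pn n ⬝ᵥ v n| * 1 := by
                apply mul_le_mul_of_nonneg_left _ (abs_nonneg _)
                rw [abs_of_nonneg (hFn0 n t)]; exact hFn1 n t
            _ = _ := mul_one _
      _ = δ n := rfl
  -- final argument
  rw [Metric.tendsto_atTop]
  intro ε hε
  obtain ⟨k, hk⟩ := exists_nat_one_div_lt hε
  set e : ℝ := 1/((k:ℝ)+1) with he_def
  have he : 0 < e := by positivity
  obtain ⟨hlt, hgt⟩ := hstrict e he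
  have hDp := hD k true
  have hDm := hD k false
  simp only [if_true, if_false] at hDp hDm
  have hFnp : Tendsto (fun n => Fn n (qα + e)) atTop (nhds (F (qα + e))) := hDp
  have hFnm : Tendsto (fun n => Fn n (qα - e)) atTop (nhds (F (qα - e))) := hDm
  have E1 : ∀ᶠ n in atTop, α < Fn n (qα + e) - δ n := by
    have := hFnp.sub hδ0
    rw [sub_zero] at this
    exact this.eventually_const_lt hgt
  have E2 : ∀ᶠ n in atTop, Fn n (qα - e) + δ n < α := by
    have := hFnm.add hδ0
    rw [add_zero] at this
    exact this.eventually_lt_const hlt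
  rw [← eventually_atTop]
  filter_upwards [E1, E2] with n h1 h2
  have hub : ∀ t, G n t ≥ Fn n t - δ n := by
    intro t
    have := (abs_le.mp (hkey n t)).1
    linarith
  have hlb : ∀ t, G n t ≤ Fn n t + δ n := by
    intro t
    have := (abs_le.mp (hkey n t)).2
    linarith
  have hmem : qα + e ∈ {t : ℝ | α ≤ G n t} := by
    have := hub (qα + e)
    simp only [Set.mem_setOf_eq]
    linarith
  have hlow : ∀ t ∈ {t : ℝ | α ≤ G n t}, qα - e ≤ t := by
    intro t ht
    by_contra hcon
    push_neg at hcon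
    have h3 : Fn n t ≤ Fn n (qα - e) := hFnmono n t (qα - e) hcon.le
    have h4 := hlb t
    simp only [Set.mem_setOf_eq] at ht
    linarith
  have hbdd : BddBelow {t : ℝ | α ≤ G n t} := ⟨qα - e, hlow⟩
  have hle : q n ≤ qα + e := by rw [hq]; exact csInf_le hbdd hmem
  have hge : qα - e ≤ q n := by rw [hq]; exact le_csInf ⟨_, hmem⟩ hlow
  rw [Real.dist_eq]
  rw [abs_sub_lt_iff]
  constructor <;> [linarith [hk]; linarith [hk]]


theorem stmt18 {Ω : Type*} [MeasurableSpace Ω]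
    (μ : Measure Ω) [IsProbabilityMeasure μ]
    (P : Measure ℝ) [IsProbabilityMeasure P]
    (m : ℕ) (hm : 0 < m)
    (X : ℕ → Ω → ℝ) (hXmeas : ∀ i, Measurable (X i))
    (hXid : ∀ i, Measure.map (X i) μ = P)
    (hXindep : iIndepFun X μ)
    (F : ℝ → ℝ) (hF : ∀ t, F t = (P (Set.Iic t)).toReal)
    (g : ℝ → Fin m → ℝ) (hgmeas : ∀ j, Measurable fun x => g x j)
    (hgL2 : ∀ j, MemLp (fun x => g x j) 2 P)
    (hPg : ∀ j, (∫ x, g x j ∂P) = 0)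
    (Sig : Matrix (Fin m) (Fin m) ℝ)
    (hSig : ∀ j k, Sig j k = ∫ x, g x j * g x k ∂P)
    (hposdef : Sig.PosDef)
    (Png : ℕ → Ω → Fin m → ℝ)
    (hPng : ∀ n ω j, Png n ω j = (n : ℝ)⁻¹ * ∑ i ∈ Finset.range n, g (X i ω) j)
    (Sign : ℕ → Ω → Matrix (Fin m) (Fin m) ℝ)
    (hSign : ∀ n ω j k, Sign n ω j k =
      (n : ℝ)⁻¹ * (∑ i ∈ Finset.range n, g (X i ω) j * g (X i ω) k)
        - Png n ω j * Png n ω k)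
    (p : ℕ → Ω → ℕ → ℝ)
    (hp : ∀ n ω i, p n ω i = (n : ℝ)⁻¹ *
      (1 - g (X i ω) ⬝ᵥ ((Sign n ω)⁻¹ *ᵥ Png n ω)
        + Png n ω ⬝ᵥ ((Sign n ω)⁻¹ *ᵥ Png n ω)))
    (Fni : ℕ → Ω → ℝ → ℝ)
    (hFni : ∀ n ω t, Fni n ω t =
      ∑ i ∈ Finset.range n, p n ω i * (if X i ω ≤ t then 1 else 0))
    (α : ℝ) (hα : α ∈ Set.Ioo (0 : ℝ) 1)
    (qα : ℝ) (hqα : qα = sInf {t : ℝ | α ≤ F t})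
    (hstrict : ∀ ε > (0 : ℝ), F (qα - ε) < α ∧ α < F (qα + ε))
    (qI : ℕ → Ω → ℝ)
    (hqI : ∀ n ω, qI n ω = sInf {t : ℝ | α ≤ Fni n ω t}) :
    ∀ᵐ ω ∂μ, Tendsto (fun n => qI n ω) atTop (nhds qα) := by
  -- integrability facts
  have hint1 : ∀ j, Integrable (fun x => g x j) P := fun j => (hgL2 j).integrable one_le_two
  have hint2 : ∀ j k, Integrable (fun x => g x j * g x k) P := by
    intro j k
    have hb : Integrable (fun x => g x j ^ 2 + g x k ^ 2) P :=
      (hgL2 j).integrable_sq.add (hgL2 k).integrable_sq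
    apply hb.mono' ((hgmeas j).mul (hgmeas k)).aestronglyMeasurable
    filter_upwards with x
    rw [Real.norm_eq_abs, Pi.mul_apply, abs_mul]
    nlinarith [sq_abs (g x j), sq_abs (g x k), sq_nonneg (|g x j| - |g x k|),
      abs_nonneg (g x j), abs_nonneg (g x k)]
  have hint3 : ∀ j, Integrable (fun x => |g x j|) P := fun j => (hint1 j).abs
  have hintInd : ∀ t : ℝ, Integrable (fun x : ℝ => if x ≤ t then (1 : ℝ) else 0) P := by
    intro t
    have : (fun x : ℝ => if x ≤ t then (1 : ℝ) else 0)
        = Set.indicator (Set.Iic t) (fun _ => (1 : ℝ)) := by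
      funext x; simp [Set.indicator_apply, Set.mem_Iic]
    rw [this]
    exact (integrable_const (1 : ℝ)).indicator measurableSet_Iic
  have hindInt : ∀ t : ℝ, (∫ x, (if x ≤ t then (1 : ℝ) else 0) ∂P) = F t := by
    intro t
    have : (fun x : ℝ => if x ≤ t then (1 : ℝ) else 0)
        = Set.indicator (Set.Iic t) (fun _ => (1 : ℝ)) := by
      funext x; simp [Set.indicator_apply, Set.mem_Iic]
    rw [this, integral_indicator_const (1 : ℝ) measurableSet_Iic, hF t, smul_eq_mul, mul_one, measureReal_def]
  -- SLLN facts
  have hA : ∀ᵐ ω ∂μ, ∀ j, Tendsto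
      (fun n : ℕ => (n : ℝ)⁻¹ * ∑ i ∈ Finset.range n, g (X i ω) j) atTop (nhds 0) := by
    rw [ae_all_iff]
    intro j
    have := slln_aux μ P X hXmeas hXid hXindep (fun x => g x j) (hgmeas j) (hint1 j)
    rwa [hPg j] at this
  have hB : ∀ᵐ ω ∂μ, ∀ j k, Tendsto
      (fun n : ℕ => (n : ℝ)⁻¹ * ∑ i ∈ Finset.range n, g (X i ω) j * g (X i ω) k) atTop
      (nhds (Sig j k)) := by
    rw [ae_all_iff]; intro j; rw [ae_all_iff]; intro k
    have := slln_aux μ P X hXmeas hXid hXindep (fun x => g x j * g x k)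
      ((hgmeas j).mul (hgmeas k)) (hint2 j k)
    rwa [← hSig j k] at this
  have hC : ∀ᵐ ω ∂μ, ∀ j, Tendsto
      (fun n : ℕ => (n : ℝ)⁻¹ * ∑ i ∈ Finset.range n, |g (X i ω) j|) atTop
      (nhds (∫ x, |g x j| ∂P)) := by
    rw [ae_all_iff]
    intro j
    exact slln_aux μ P X hXmeas hXid hXindep (fun x => |g x j|) (hgmeas j).abs (hint3 j)
  have hD : ∀ᵐ ω ∂μ, ∀ k : ℕ, ∀ s : Bool, Tendsto
      (fun n : ℕ => (n : ℝ)⁻¹ * ∑ i ∈ Finset.range n,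
        (if X i ω ≤ (if s then qα + 1/(k+1) else qα - 1/(k+1)) then (1:ℝ) else 0)) atTop
      (nhds (F (if s then qα + 1/(k+1) else qα - 1/(k+1)))) := by
    rw [ae_all_iff]; intro k; rw [ae_all_iff]; intro s
    set t := if s then qα + 1/((k:ℝ)+1) else qα - 1/((k:ℝ)+1)
    have := slln_aux μ P X hXmeas hXid hXindep (fun x => if x ≤ t then (1:ℝ) else 0)
      (Measurable.ite measurableSet_Iic measurable_const measurable_const) (hintInd t)
    rwa [hindInt t] at this
  filter_upwards [hA, hB, hC, hD] with ω hA hB hC hD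
  exact det_core (fun i => X i ω) g F α qα hα hstrict Sig hposdef.det_pos.ne'
    (fun j => ∫ x, |g x j| ∂P)
    (fun n => Png n ω) (fun n j => hPng n ω j)
    (fun n => Sign n ω) (fun n j k => hSign n ω j k)
    (fun n => Fni n ω)
    (fun n t => by simp only [hFni, hp])
    (fun n => qI n ω) (fun n => hqI n ω) hA hB hC hD
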